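/- Let u ≤ w in Bruhat order on S_n, let (s_{i_1}, ..., s_{i_a}) be a reduced word for w, and let (s_{j_1}, ..., s_{j_b}) be a reduced word for u^{-1} w_0, where w_0 is the longest element of S_n. Then the Demazure product s_{i_1} * ... * s_{i_a} * s_{j_1} * ... * s_{j_b} equals w_0. -/

import Mathlib

/-- The simple transposition `s_{i+1}` (1-indexed) in `S_{n+1}`. -/
def sgen {n : ℕ} (i : Fin n) : Equiv.Perm (Fin (n + 1)) :=
  Equiv.swap i.castSucc i.succ

/-- Coxeter length of a permutation, as the number of inversions. -/
def len {n : ℕ} (w : Equiv.Perm (Fin n)) : ℕ :=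
  (Finset.univ.filter fun p : Fin n × Fin n => p.1 < p.2 ∧ w p.2 < w p.1).card

/-- Product of the word of simple transpositions indexed by `l`. -/
def wordProd {n : ℕ} (l : List (Fin n)) : Equiv.Perm (Fin (n + 1)) :=
  (l.map sgen).prod

/-- `l` is a reduced word for `w`. -/
def IsReducedWord {n : ℕ} (l : List (Fin n)) (w : Equiv.Perm (Fin (n + 1))) : Prop :=
  wordProd l = w ∧ l.length = len w

/-- The Demazure product of a word of simple transpositions. -/
def demazure {n : ℕ} : List (Fin n) → Equiv.Perm (Fin (n + 1))
  | [] => 1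
  | i :: rest =>
    if len (sgen i * demazure rest) > len (demazure rest) then sgen i * demazure rest
    else demazure rest

/-- Bruhat order on `S_n`, via the rank-matrix characterization. -/
def BruhatLE {n : ℕ} (u v : Equiv.Perm (Fin n)) : Prop :=
  ∀ i j : ℕ,
    (Finset.univ.filter fun a : Fin n => (a : ℕ) < j ∧ ((v a : ℕ)) < i).card ≤
    (Finset.univ.filter fun a : Fin n => (a : ℕ) < j ∧ ((u a : ℕ)) < i).card

/-- The longest element `w₀` of `S_{n+1}`, `w₀(j) = n + 1 - j`. -/
def longest (n : ℕ) : Equiv.Perm (Fin (n + 1)) :=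
  ⟨Fin.rev, Fin.rev, Fin.rev_rev, Fin.rev_rev⟩

namespace Aux
open Finset Equiv


/-- rank matrix -/
def rk {n : ℕ} (u : Equiv.Perm (Fin n)) (i j : ℕ) : ℕ :=
  (Finset.univ.filter fun a : Fin n => (a : ℕ) < j ∧ ((u a : ℕ)) < i).card

lemma rk_zero {n : ℕ} (u : Equiv.Perm (Fin n)) (i : ℕ) : rk u i 0 = 0 := by
  simp [rk]

lemma rk_succ {n : ℕ} (u : Equiv.Perm (Fin n)) (i j : ℕ) (hj : j < n) :
    rk u i (j + 1) = rk u i j + (if ((u ⟨j, hj⟩ : Fin n) : ℕ) < i then 1 else 0) := by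
  classical
  have hsplit : (Finset.univ.filter fun a : Fin n => (a : ℕ) < j + 1 ∧ ((u a : ℕ)) < i)
      = (Finset.univ.filter fun a : Fin n => ((a : ℕ) < j ∧ ((u a : ℕ)) < i))
        ∪ (Finset.univ.filter fun a : Fin n => (a = ⟨j, hj⟩ ∧ ((u a : ℕ)) < i)) := by
    ext a
    simp only [mem_filter, mem_union, mem_univ, true_and]
    constructor
    · rintro ⟨h1, h2⟩
      rcases Nat.lt_succ_iff_lt_or_eq.mp h1 with h | h
      · exact Or.inl ⟨h, h2⟩
      · exact Or.inr ⟨Fin.ext h, h2⟩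
    · rintro (⟨h1, h2⟩ | ⟨h1, h2⟩)
      · exact ⟨Nat.lt_succ_of_lt h1, h2⟩
      · exact ⟨by rw [h1]; exact Nat.lt_succ_self j, h2⟩
  have hdisj : Disjoint
      (Finset.univ.filter fun a : Fin n => ((a : ℕ) < j ∧ ((u a : ℕ)) < i))
      (Finset.univ.filter fun a : Fin n => (a = ⟨j, hj⟩ ∧ ((u a : ℕ)) < i)) := by
    rw [Finset.disjoint_filter]
    rintro a _ ⟨h1, _⟩ ⟨h2, _⟩
    rw [h2] at h1; exact absurd h1 (lt_irrefl j)
  rw [rk, hsplit, Finset.card_union_of_disjoint hdisj]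
  congr 1
  by_cases h : ((u ⟨j, hj⟩ : Fin n) : ℕ) < i
  · rw [if_pos h]
    rw [Finset.card_eq_one]
    refine ⟨⟨j, hj⟩, ?_⟩
    ext a
    simp only [mem_filter, mem_univ, true_and, mem_singleton]
    constructor
    · rintro ⟨h1, _⟩; exact h1
    · rintro rfl; exact ⟨rfl, h⟩
  · rw [if_neg h]
    rw [Finset.card_eq_zero]
    ext a
    simp only [mem_filter, mem_univ, true_and, Finset.notMem_empty, iff_false, not_and]
    rintro rfl h2; exact h h2

lemma rk_stable {n : ℕ} (u : Equiv.Perm (Fin n)) (i j : ℕ) (hj : n ≤ j) :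
    rk u i j = rk u i n := by
  unfold rk
  congr 1
  apply Finset.filter_congr
  intro a _
  have : (a : ℕ) < n := a.isLt
  constructor
  · rintro ⟨_, h2⟩; exact ⟨this, h2⟩
  · rintro ⟨_, h2⟩; exact ⟨lt_of_lt_of_le this hj, h2⟩

lemma rk_congr {n : ℕ} {u v : Equiv.Perm (Fin n)} {j : ℕ}
    (h : ∀ a : Fin n, (a : ℕ) < j → u a = v a) (i : ℕ) : rk u i j = rk v i j := by
  unfold rk
  congr 1
  apply Finset.filter_congr
  intro a _
  constructor
  · rintro ⟨h1, h2⟩; exact ⟨h1, by rw [← h a h1]; exact h2⟩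
  · rintro ⟨h1, h2⟩; exact ⟨h1, by rw [h a h1]; exact h2⟩

lemma rk_comp_equiv {n : ℕ} (u σ : Equiv.Perm (Fin n)) {j : ℕ}
    (h : ∀ a : Fin n, ((σ a : Fin n) : ℕ) < j ↔ (a : ℕ) < j) (i : ℕ) :
    rk (u * σ) i j = rk u i j := by
  unfold rk
  apply Finset.card_equiv σ
  intro a
  rw [mem_filter, mem_filter]
  simp only [mem_univ, true_and, Equiv.Perm.mul_apply]
  rw [h a]





lemma sgen_castSucc {n : ℕ} (k : Fin n) : sgen k k.castSucc = k.succ := by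
  rw [sgen]; exact Equiv.swap_apply_left _ _

lemma sgen_succ {n : ℕ} (k : Fin n) : sgen k k.succ = k.castSucc := by
  rw [sgen]; exact Equiv.swap_apply_right _ _

lemma sgen_ne {n : ℕ} (k : Fin n) {a : Fin (n+1)} (h1 : a ≠ k.castSucc) (h2 : a ≠ k.succ) :
    sgen k a = a := by
  rw [sgen]; exact Equiv.swap_apply_of_ne_of_ne h1 h2

lemma mul_sgen_castSucc {n : ℕ} (u : Equiv.Perm (Fin (n+1))) (k : Fin n) :
    (u * sgen k) k.castSucc = u k.succ := by
  rw [Equiv.Perm.mul_apply, sgen_castSucc]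

lemma mul_sgen_succ {n : ℕ} (u : Equiv.Perm (Fin (n+1))) (k : Fin n) :
    (u * sgen k) k.succ = u k.castSucc := by
  rw [Equiv.Perm.mul_apply, sgen_succ]

lemma sgen_lt_iff {n : ℕ} (k : Fin n) {j : ℕ} (hj : j ≠ (k : ℕ) + 1) (a : Fin (n+1)) :
    ((sgen k a : Fin (n+1)) : ℕ) < j ↔ (a : ℕ) < j := by
  rcases eq_or_ne a k.castSucc with rfl | h1
  · rw [sgen_castSucc]
    simp only [Fin.coe_castSucc, Fin.val_succ]
    omega
  rcases eq_or_ne a k.succ with rfl | h2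
  · rw [sgen_succ]
    simp only [Fin.coe_castSucc, Fin.val_succ]
    omega
  · rw [sgen_ne k h1 h2]

lemma rk_mul_sgen {n : ℕ} (u : Equiv.Perm (Fin (n+1))) (k : Fin n) {j : ℕ}
    (hj : j ≠ (k : ℕ) + 1) (i : ℕ) : rk (u * sgen k) i j = rk u i j :=
  rk_comp_equiv u (sgen k) (sgen_lt_iff k hj) i

lemma rk_succ_lt {n : ℕ} (u : Equiv.Perm (Fin (n+1))) (i j : ℕ) (hj : j < n + 1)
    (x : Fin (n+1)) (hx : (x : ℕ) = j) (h : (u x : ℕ) < i) :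
    rk u i (j+1) = rk u i j + 1 := by
  have hx' : (⟨j, hj⟩ : Fin (n+1)) = x := Fin.ext hx.symm
  rw [rk_succ u i j hj, hx', if_pos h]

lemma rk_succ_ge {n : ℕ} (u : Equiv.Perm (Fin (n+1))) (i j : ℕ) (hj : j < n + 1)
    (x : Fin (n+1)) (hx : (x : ℕ) = j) (h : ¬ (u x : ℕ) < i) :
    rk u i (j+1) = rk u i j := by
  have hx' : (⟨j, hj⟩ : Fin (n+1)) = x := Fin.ext hx.symm
  rw [rk_succ u i j hj, hx', if_neg h, add_zero]

lemma liftB {n : ℕ} (k : Fin n) {w X : Equiv.Perm (Fin (n+1))}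
    (hw : w k.castSucc < w k.succ) (hX : X k.castSucc < X k.succ)
    (h : ∀ i j, rk (w * sgen k) i j ≤ rk X i j) :
    ∀ i j, rk w i j ≤ rk X i j := by
  intro i j
  rcases eq_or_ne j ((k : ℕ) + 1) with rfl | hj
  swap
  · rw [← rk_mul_sgen w k hj i]; exact h i j
  have hk1 : (k : ℕ) < n + 1 := by omega
  have hk2 : (k : ℕ) + 1 < n + 1 := by omega
  have hcs : ((k.castSucc : Fin (n+1)) : ℕ) = (k : ℕ) := Fin.coe_castSucc k
  have hss : ((k.succ : Fin (n+1)) : ℕ) = (k : ℕ) + 1 := Fin.val_succ k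
  have hwAB : (w k.castSucc : ℕ) < (w k.succ : ℕ) := hw
  have hXCD : (X k.castSucc : ℕ) < (X k.succ : ℕ) := hX
  have hws0 : rk (w * sgen k) i (k : ℕ) = rk w i (k : ℕ) := rk_mul_sgen w k (by omega) i
  have hws2' : rk (w * sgen k) i ((k : ℕ) + 2) = rk w i ((k : ℕ) + 2) :=
    rk_mul_sgen w k (by omega) i
  by_cases hA : (w k.castSucc : ℕ) < i
  · by_cases hB : (w k.succ : ℕ) < i
    · -- both below i: columns agree
      have e1 : rk w i ((k : ℕ) + 1) = rk w i (k : ℕ) + 1 := rk_succ_lt w i _ hk1 _ hcs hA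
      have e2 : rk (w * sgen k) i ((k : ℕ) + 1) = rk (w * sgen k) i (k : ℕ) + 1 := by
        refine rk_succ_lt _ i _ hk1 k.castSucc hcs ?_
        rw [mul_sgen_castSucc]; exact hB
      have := h i ((k : ℕ) + 1)
      omega
    · -- special case  w kc < i ≤ w ks
      by_cases hC : (X k.castSucc : ℕ) < i
      · have e1 : rk w i ((k : ℕ) + 1) = rk w i (k : ℕ) + 1 := rk_succ_lt w i _ hk1 _ hcs hA
        have e2 : rk X i ((k : ℕ) + 1) = rk X i (k : ℕ) + 1 := rk_succ_lt X i _ hk1 _ hcs hC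
        have := h i (k : ℕ)
        omega
      · have hD : ¬ (X k.succ : ℕ) < i := by omega
        have e1 : rk w i ((k : ℕ) + 1) = rk w i (k : ℕ) + 1 := rk_succ_lt w i _ hk1 _ hcs hA
        have eX : rk X i ((k : ℕ) + 2) = rk X i ((k : ℕ) + 1) :=
          rk_succ_ge X i _ hk2 k.succ hss hD
        have ews1 : rk (w * sgen k) i ((k : ℕ) + 1) = rk (w * sgen k) i (k : ℕ) := by
          refine rk_succ_ge _ i _ hk1 k.castSucc hcs ?_
          rw [mul_sgen_castSucc]; exact hB
        have ews2 : rk (w * sgen k) i ((k : ℕ) + 2) = rk (w * sgen k) i ((k : ℕ) + 1) + 1 := by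
          refine rk_succ_lt _ i _ hk2 k.succ hss ?_
          rw [mul_sgen_succ]; exact hA
        have := h i ((k : ℕ) + 2)
        omega
  · -- w kc ≥ i hence w ks ≥ i
    have hB : ¬ (w k.succ : ℕ) < i := by omega
    have e1 : rk w i ((k : ℕ) + 1) = rk w i (k : ℕ) := rk_succ_ge w i _ hk1 _ hcs hA
    have e2 : rk (w * sgen k) i ((k : ℕ) + 1) = rk (w * sgen k) i (k : ℕ) := by
      refine rk_succ_ge _ i _ hk1 k.castSucc hcs ?_
      rw [mul_sgen_castSucc]; exact hB
    have := h i ((k : ℕ) + 1)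
    omega

lemma liftA {n : ℕ} (k : Fin n) {u : Equiv.Perm (Fin (n+1))}
    (hu : u k.succ < u k.castSucc) :
    ∀ i j, rk u i j ≤ rk (u * sgen k) i j := by
  intro i j
  rcases eq_or_ne j ((k : ℕ) + 1) with rfl | hj
  swap
  · rw [rk_mul_sgen u k hj i]
  have hk1 : (k : ℕ) < n + 1 := by omega
  have hcs : ((k.castSucc : Fin (n+1)) : ℕ) = (k : ℕ) := Fin.coe_castSucc k
  have hu' : (u k.succ : ℕ) < (u k.castSucc : ℕ) := hu
  have h0 : rk (u * sgen k) i (k : ℕ) = rk u i (k : ℕ) := rk_mul_sgen u k (by omega) i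
  by_cases hA : (u k.castSucc : ℕ) < i
  · have hB : (u k.succ : ℕ) < i := by omega
    have e1 : rk u i ((k : ℕ) + 1) = rk u i (k : ℕ) + 1 := rk_succ_lt u i _ hk1 _ hcs hA
    have e2 : rk (u * sgen k) i ((k : ℕ) + 1) = rk (u * sgen k) i (k : ℕ) + 1 := by
      refine rk_succ_lt _ i _ hk1 k.castSucc hcs ?_
      rw [mul_sgen_castSucc]; exact hB
    omega
  · have e1 : rk u i ((k : ℕ) + 1) = rk u i (k : ℕ) := rk_succ_ge u i _ hk1 _ hcs hA
    have e2 : rk (u * sgen k) i ((k : ℕ) + 1) ≥ rk (u * sgen k) i (k : ℕ) := by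
      by_cases hB : (u k.succ : ℕ) < i
      · rw [rk_succ_lt _ i _ hk1 k.castSucc hcs (by rw [mul_sgen_castSucc]; exact hB)]; omega
      · rw [rk_succ_ge _ i _ hk1 k.castSucc hcs (by rw [mul_sgen_castSucc]; exact hB)]
    omega

lemma lifting {n : ℕ} (k : Fin n) {u w : Equiv.Perm (Fin (n+1))}
    (hw : w k.castSucc < w k.succ)
    (hle : ∀ i j, rk (w * sgen k) i j ≤ rk u i j) :
    ∀ i j, rk w i j ≤ rk (if u k.succ < u k.castSucc then u * sgen k else u) i j := by
  by_cases hd : u k.succ < u k.castSucc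
  · rw [if_pos hd]
    refine liftB k hw ?_ fun i j => le_trans (hle i j) (liftA k hd i j)
    rw [mul_sgen_castSucc, mul_sgen_succ]
    exact hd
  · rw [if_neg hd]
    have hne : u k.castSucc ≠ u k.succ :=
      fun h => (Fin.castSucc_lt_succ : k.castSucc < k.succ).ne (u.injective h)
    exact liftB k hw (lt_of_le_of_ne (not_lt.mp hd) hne) hle









lemma sgen_sgen {n : ℕ} (k : Fin n) (a : Fin (n+1)) : sgen k (sgen k a) = a := by
  rw [sgen]; exact Equiv.swap_apply_self _ _ _

lemma sgen_mul_self {n : ℕ} (k : Fin n) : sgen k * sgen k = 1 := by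
  rw [sgen]; exact Equiv.swap_mul_self _ _

lemma sgen_inv {n : ℕ} (k : Fin n) : (sgen k)⁻¹ = sgen k := by
  rw [sgen]; exact Equiv.swap_inv _ _

/-- order preservation of the swap away from the swapped pair -/
lemma ord {n : ℕ} (k : Fin n) {a b : Fin (n+1)} (hab : a < b)
    (h : ¬(a = k.castSucc ∧ b = k.succ)) : sgen k a < sgen k b := by
  have hab' : (a : ℕ) < (b : ℕ) := hab
  rcases eq_or_ne a k.castSucc with rfl | ha1
  · rcases eq_or_ne b k.succ with rfl | hb1
    · exact absurd ⟨rfl, rfl⟩ h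
    · have hb2 : b ≠ k.castSucc := ne_of_gt hab
      rw [sgen_castSucc, sgen_ne k hb2 hb1]
      have h1 : (k : ℕ) < (b : ℕ) := by simpa using hab'
      have h2 : (b : ℕ) ≠ (k : ℕ) + 1 := fun hh => hb1 (Fin.ext (by simpa using hh))
      exact (Fin.lt_def).mpr (by simp; omega)
  · rcases eq_or_ne a k.succ with rfl | ha2
    · have hb1 : b ≠ k.succ := ne_of_gt hab
      have hb2 : b ≠ k.castSucc := by
        intro hh; subst hh
        have := hab'
        simp only [Fin.val_succ, Fin.coe_castSucc] at this
        omega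
      rw [sgen_succ, sgen_ne k hb2 hb1]
      have h1 : (k : ℕ) + 1 < (b : ℕ) := by simpa using hab'
      exact (Fin.lt_def).mpr (by simp; omega)
    · rcases eq_or_ne b k.castSucc with rfl | hb1
      · rw [sgen_ne k ha1 ha2, sgen_castSucc]
        have h1 : (a : ℕ) < (k : ℕ) := by simpa using hab'
        exact (Fin.lt_def).mpr (by simp; omega)
      · rcases eq_or_ne b k.succ with rfl | hb2
        · rw [sgen_ne k ha1 ha2, sgen_succ]
          have h1 : (a : ℕ) < (k : ℕ) + 1 := by simpa using hab'
          have h2 : (a : ℕ) ≠ (k : ℕ) := fun hh => ha1 (Fin.ext (by simpa using hh))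
          exact (Fin.lt_def).mpr (by simp; omega)
        · rw [sgen_ne k ha1 ha2, sgen_ne k hb1 hb2]
          exact hab

lemma len_mul_sgen {n : ℕ} (u : Equiv.Perm (Fin (n+1))) (k : Fin n)
    (h : u k.castSucc < u k.succ) : len (u * sgen k) = len u + 1 := by
  classical
  set S := Finset.univ.filter fun p : Fin (n+1) × Fin (n+1) =>
    p.1 < p.2 ∧ (u * sgen k) p.2 < (u * sgen k) p.1 with hS
  set T := Finset.univ.filter fun p : Fin (n+1) × Fin (n+1) =>
    p.1 < p.2 ∧ u p.2 < u p.1 with hT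
  have hmem : (k.castSucc, k.succ) ∈ S := by
    simp only [hS, mem_filter, mem_univ, true_and]
    refine ⟨(Fin.castSucc_lt_succ : k.castSucc < k.succ), ?_⟩
    simp only [Equiv.Perm.mul_apply, sgen_castSucc, sgen_succ]
    exact h
  have hcard : (S.erase (k.castSucc, k.succ)).card = T.card := by
    symm
    apply Finset.card_equiv (Equiv.prodCongr (sgen k) (sgen k))
    intro p
    rw [hS, hT, mem_erase, mem_filter, mem_filter]
    simp only [mem_erase, mem_filter, mem_univ, true_and, Equiv.prodCongr_apply,
      Prod.map, Equiv.Perm.mul_apply, sgen_sgen, Prod.mk.injEq, ne_eq]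
    constructor
    · rintro ⟨h1, h2⟩
      have hne : ¬(p.1 = k.castSucc ∧ p.2 = k.succ) := by
        rintro ⟨e1, e2⟩
        rw [e1, e2] at h2
        exact absurd h (asymm h2)
      refine ⟨?_, ord k h1 hne, h2⟩
      rintro ⟨e1, e2⟩
      have : p.1 = k.succ := by rw [← sgen_sgen k p.1, e1, sgen_castSucc]
      have h2' : p.2 = k.castSucc := by rw [← sgen_sgen k p.2, e2, sgen_succ]
      rw [this, h2'] at h1
      exact absurd h1 (asymm (Fin.castSucc_lt_succ : k.castSucc < k.succ))
    · rintro ⟨hne, h1, h2⟩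
      refine ⟨?_, h2⟩
      have hne' : ¬(sgen k p.1 = k.castSucc ∧ sgen k p.2 = k.succ) := fun hh => hne hh
      have := ord k h1 hne'
      rwa [sgen_sgen, sgen_sgen] at this
  have := Finset.card_erase_add_one hmem
  rw [len, len, ← hS, ← hT, ← this, hcard]

lemma len_inv {n : ℕ} (u : Equiv.Perm (Fin n)) : len u⁻¹ = len u := by
  classical
  apply Finset.card_equiv ((Equiv.prodComm _ _).trans (Equiv.prodCongr u⁻¹ u⁻¹))
  intro p
  simp only [mem_filter, mem_univ, true_and, Equiv.trans_apply, Equiv.prodComm_apply,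
    Prod.swap, Equiv.prodCongr_apply, Prod.map, Equiv.Perm.coe_inv, Equiv.apply_symm_apply]
  exact and_comm

def NP (n : ℕ) : ℕ :=
  (Finset.univ.filter fun p : Fin (n+1) × Fin (n+1) => p.1 < p.2).card

lemma len_le_NP {n : ℕ} (u : Equiv.Perm (Fin (n+1))) : len u ≤ NP n := by
  apply Finset.card_le_card
  intro p hp
  simp only [mem_filter, mem_univ, true_and] at *
  exact hp.1

lemma len_mul_longest {n : ℕ} (y : Equiv.Perm (Fin (n+1))) :
    len (y * longest n) + len y = NP n := by
  classical
  have h1 : len (y * longest n)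
      = (Finset.univ.filter fun p : Fin (n+1) × Fin (n+1) =>
          p.1 < p.2 ∧ y p.1 < y p.2).card := by
    apply Finset.card_equiv ((Equiv.prodComm _ _).trans
      (Equiv.prodCongr Fin.revPerm Fin.revPerm))
    intro p
    simp only [mem_filter, mem_univ, true_and, Equiv.trans_apply, Equiv.prodComm_apply,
      Prod.swap, Equiv.prodCongr_apply, Prod.map, Fin.revPerm_apply]
    have : ∀ a : Fin (n+1), (y * longest n) a = y a.rev := fun a => rfl
    rw [this, this]
    constructor
    · rintro ⟨hl, hc⟩; exact ⟨Fin.rev_lt_rev.mpr hl, hc⟩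
    · rintro ⟨hl, hc⟩; exact ⟨Fin.rev_lt_rev.mp hl, hc⟩
  rw [h1, len, NP]
  rw [← Finset.card_union_of_disjoint]
  · congr 1
    ext p
    simp only [mem_union, mem_filter, mem_univ, true_and]
    constructor
    · rintro (⟨h1, _⟩ | ⟨h1, _⟩) <;> exact h1
    · intro hp
      have hne : y p.1 ≠ y p.2 := fun hh => (ne_of_lt hp) (y.injective hh)
      rcases lt_or_gt_of_ne hne with hlt | hgt
      · exact Or.inl ⟨hp, hlt⟩
      · exact Or.inr ⟨hp, hgt⟩
  · rw [Finset.disjoint_filter]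
    rintro p _ ⟨_, h1⟩ ⟨_, h2⟩
    exact absurd h1 (asymm h2)




lemma neq_vals {n : ℕ} (x : Equiv.Perm (Fin (n+1))) (k : Fin n) :
    x k.castSucc ≠ x k.succ :=
  fun h => (Fin.castSucc_lt_succ : k.castSucc < k.succ).ne (x.injective h)

lemma len_dichotomy {n : ℕ} (x : Equiv.Perm (Fin (n+1))) (k : Fin n) :
    (x k.castSucc < x k.succ ∧ len (x * sgen k) = len x + 1) ∨
    (x k.succ < x k.castSucc ∧ len x = len (x * sgen k) + 1) := by
  rcases lt_or_gt_of_ne (neq_vals x k) with h | h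
  · exact Or.inl ⟨h, len_mul_sgen x k h⟩
  · right
    refine ⟨h, ?_⟩
    have h2 : (x * sgen k) k.castSucc < (x * sgen k) k.succ := by
      rw [mul_sgen_castSucc, mul_sgen_succ]; exact h
    have h3 := len_mul_sgen (x * sgen k) k h2
    rw [mul_assoc, sgen_mul_self, mul_one] at h3
    exact h3

lemma len_lt_iff {n : ℕ} (x : Equiv.Perm (Fin (n+1))) (k : Fin n) :
    len (x * sgen k) < len x ↔ x k.succ < x k.castSucc := by
  rcases len_dichotomy x k with ⟨h1, h2⟩ | ⟨h1, h2⟩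
  · constructor
    · intro h; omega
    · intro h; exact absurd h1 (asymm h)
  · constructor
    · intro _; exact h1
    · intro _; omega

lemma len_mul_sgen_le {n : ℕ} (x : Equiv.Perm (Fin (n+1))) (k : Fin n) :
    len (x * sgen k) ≤ len x + 1 := by
  rcases len_dichotomy x k with ⟨_, h2⟩ | ⟨_, h2⟩ <;> omega

lemma len_sgen_mul_le {n : ℕ} (x : Equiv.Perm (Fin (n+1))) (k : Fin n) :
    len (sgen k * x) ≤ len x + 1 := by
  have h : sgen k * x = (x⁻¹ * sgen k)⁻¹ := by
    rw [mul_inv_rev, inv_inv, sgen_inv]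
  rw [h, len_inv]
  calc len (x⁻¹ * sgen k) ≤ len x⁻¹ + 1 := len_mul_sgen_le x⁻¹ k
    _ = len x + 1 := by rw [len_inv]

/-- the Demazure step -/
def dstep {n : ℕ} (i : Fin n) (v : Equiv.Perm (Fin (n+1))) : Equiv.Perm (Fin (n+1)) :=
  if len (sgen i * v) > len v then sgen i * v else v

lemma demazure_cons {n : ℕ} (i : Fin n) (l : List (Fin n)) :
    demazure (i :: l) = dstep i (demazure l) := rfl

lemma demazure_append {n : ℕ} (l₁ l₂ : List (Fin n)) :
    demazure (l₁ ++ l₂) = l₁.foldr dstep (demazure l₂) := by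
  induction l₁ with
  | nil => rfl
  | cons i l ih => rw [List.cons_append, demazure_cons, ih, List.foldr_cons]

lemma wordProd_nil {n : ℕ} : wordProd ([] : List (Fin n)) = 1 := rfl

lemma wordProd_cons {n : ℕ} (i : Fin n) (l : List (Fin n)) :
    wordProd (i :: l) = sgen i * wordProd l := by
  simp [wordProd]

lemma wordProd_append_singleton {n : ℕ} (l : List (Fin n)) (i : Fin n) :
    wordProd (l ++ [i]) = wordProd l * sgen i := by
  simp [wordProd]

lemma len_wordProd_le {n : ℕ} (l : List (Fin n)) : len (wordProd l) ≤ l.length := by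
  induction l with
  | nil =>
    rw [wordProd_nil]
    have : len (1 : Equiv.Perm (Fin (n+1))) = 0 := by
      rw [len]
      rw [Finset.card_eq_zero]
      ext p
      simp only [mem_filter, mem_univ, true_and, Finset.notMem_empty, iff_false, not_and]
      intro h1 h2
      exact absurd h1 (asymm h2)
    omega
  | cons i l ih =>
    rw [wordProd_cons]
    calc len (sgen i * wordProd l) ≤ len (wordProd l) + 1 := len_sgen_mul_le _ i
      _ ≤ l.length + 1 := by omega
      _ = (i :: l).length := by simp

lemma reduced_demazure {n : ℕ} (l : List (Fin n)) (h : len (wordProd l) = l.length) :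
    demazure l = wordProd l := by
  induction l with
  | nil => rfl
  | cons i l ih =>
    rw [wordProd_cons] at h
    have h1 : len (wordProd l) ≤ l.length := len_wordProd_le l
    have h2 : len (sgen i * wordProd l) ≤ len (wordProd l) + 1 := len_sgen_mul_le _ i
    have h3 : l.length + 1 = (i :: l).length := by simp
    have h4 : len (wordProd l) = l.length := by omega
    have h5 : len (sgen i * wordProd l) > len (wordProd l) := by omega
    rw [demazure_cons, ih h4, dstep, if_pos h5, wordProd_cons]

lemma dstep_corr {n : ℕ} (i : Fin n) (x : Equiv.Perm (Fin (n+1))) :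
    dstep i (x⁻¹ * longest n)
      = (if x i.succ < x i.castSucc then x * sgen i else x)⁻¹ * longest n := by
  have key : sgen i * (x⁻¹ * longest n) = (x * sgen i)⁻¹ * longest n := by
    rw [mul_inv_rev, sgen_inv, mul_assoc]
  have e1 : len (x⁻¹ * longest n) + len x = NP n := by
    rw [← len_inv x]; exact len_mul_longest x⁻¹
  have e2 : len ((x * sgen i)⁻¹ * longest n) + len (x * sgen i) = NP n := by
    rw [← len_inv (x * sgen i)]; exact len_mul_longest (x * sgen i)⁻¹
  by_cases hd : x i.succ < x i.castSucc
  · have hlt : len (x * sgen i) < len x := (len_lt_iff x i).mpr hd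
    have hcond : len (sgen i * (x⁻¹ * longest n)) > len (x⁻¹ * longest n) := by
      rw [key]; omega
    rw [dstep, if_pos hcond, if_pos hd, key]
  · have hge : ¬ len (x * sgen i) < len x := fun h => hd ((len_lt_iff x i).mp h)
    have hcond : ¬ len (sgen i * (x⁻¹ * longest n)) > len (x⁻¹ * longest n) := by
      rw [key]; omega
    rw [dstep, if_neg hcond, if_neg hd]

lemma card_filter_lt_fin {n : ℕ} (m : ℕ) (hm : m ≤ n + 1) :
    (Finset.univ.filter fun b : Fin (n+1) => (b : ℕ) < m).card = m := by
  rcases eq_or_lt_of_le hm with rfl | hm'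
  · rw [Finset.filter_true_of_mem (fun b _ => b.isLt)]
    simp
  · have : (Finset.univ.filter fun b : Fin (n+1) => (b : ℕ) < m)
        = Finset.Iio (⟨m, hm'⟩ : Fin (n+1)) := by
      ext b
      simp [Finset.mem_Iio, Fin.lt_def]
    rw [this, Fin.card_Iio]

lemma eq_one_of_rk_le {n : ℕ} (x : Equiv.Perm (Fin (n+1)))
    (hle : ∀ i j : ℕ,
      (Finset.univ.filter fun a : Fin (n+1) => (a : ℕ) < j ∧ (((1 : Equiv.Perm (Fin (n+1))) a : ℕ)) < i).card ≤
      (Finset.univ.filter fun a : Fin (n+1) => (a : ℕ) < j ∧ ((x a : ℕ)) < i).card) :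
    x = 1 := by
  have key : ∀ m : ℕ, m ≤ n + 1 → ∀ b : Fin (n+1), (b : ℕ) < m → (x b : ℕ) < m := by
    intro m hm b hb
    have h1 : (Finset.univ.filter fun a : Fin (n+1) =>
        (a : ℕ) < m ∧ (((1 : Equiv.Perm (Fin (n+1))) a : ℕ)) < m).card = m := by
      have heq1 : (Finset.univ.filter fun a : Fin (n+1) =>
          (a : ℕ) < m ∧ (((1 : Equiv.Perm (Fin (n+1))) a : ℕ)) < m)
          = (Finset.univ.filter fun a : Fin (n+1) => (a : ℕ) < m) := by
        apply Finset.filter_congr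
        intro a _
        simp only [Equiv.Perm.one_apply, and_self]
      rw [heq1]
      exact card_filter_lt_fin m hm
    have h2 := hle m m
    rw [h1] at h2
    have hsub : (Finset.univ.filter fun a : Fin (n+1) => (a : ℕ) < m ∧ ((x a : ℕ)) < m)
        ⊆ (Finset.univ.filter fun a : Fin (n+1) => (a : ℕ) < m) := by
      intro a ha
      simp only [mem_filter, mem_univ, true_and] at *
      exact ha.1
    have hcard : (Finset.univ.filter fun a : Fin (n+1) => (a : ℕ) < m).card = m :=
      card_filter_lt_fin m hm
    have heq : (Finset.univ.filter fun a : Fin (n+1) => (a : ℕ) < m ∧ ((x a : ℕ)) < m)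
        = (Finset.univ.filter fun a : Fin (n+1) => (a : ℕ) < m) :=
      Finset.eq_of_subset_of_card_le hsub (by omega)
    have hbmem : b ∈ (Finset.univ.filter fun a : Fin (n+1) => (a : ℕ) < m) := by
      simp only [mem_filter, mem_univ, true_and]; exact hb
    rw [← heq] at hbmem
    simp only [mem_filter, mem_univ, true_and] at hbmem
    exact hbmem.2
  have main : ∀ m : ℕ, ∀ a : Fin (n+1), (a : ℕ) < m → x a = a := by
    intro m
    induction m with
    | zero => intro a ha; omega
    | succ m ih =>
      intro a ha
      rcases Nat.lt_succ_iff_lt_or_eq.mp ha with h | h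
      · exact ih a h
      · have hxa : (x a : ℕ) < (a : ℕ) + 1 := by
          have := key ((a : ℕ) + 1) (a.isLt) a (Nat.lt_succ_self _)
          exact this
        rcases Nat.lt_succ_iff_lt_or_eq.mp hxa with h2 | h2
        · exfalso
          have h3 : x (x a) = x a := by
            rw [ih (x a) (by omega)]
          have h4 : x a = a := x.injective h3
          rw [h4] at h2
          exact absurd h2 (lt_irrefl _)
        · exact Fin.ext h2
  exact Equiv.ext fun a => main (n + 1) a a.isLt


lemma mainLem {n : ℕ} (l : List (Fin n)) (x : Equiv.Perm (Fin (n+1)))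
    (hred : len (wordProd l) = l.length)
    (hle : ∀ i j, rk (wordProd (n := n) l) i j ≤ rk x i j) :
    l.foldr dstep (x⁻¹ * longest n) = longest n := by
  induction l using List.reverseRecOn generalizing x with
  | nil =>
    have hx : x = 1 := eq_one_of_rk_le x hle
    subst hx
    simp [List.foldr]
  | append_singleton l' i ih =>
    rw [wordProd_append_singleton] at hred hle
    have hlen' : len (wordProd l') ≤ l'.length := len_wordProd_le l'
    have hll : (l' ++ [i]).length = l'.length + 1 := by simp
    rw [hll] at hred
    rcases len_dichotomy (wordProd l') i with ⟨hd, he⟩ | ⟨hd, he⟩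
    swap
    · omega
    have hred' : len (wordProd l') = l'.length := by omega
    have hle' : ∀ i' j, rk (wordProd (n := n) l') i' j
        ≤ rk (if x i.succ < x i.castSucc then x * sgen i else x) i' j :=
      Aux.lifting i hd hle
    rw [List.foldr_append]
    have hstep : List.foldr dstep (x⁻¹ * longest n) [i] = dstep i (x⁻¹ * longest n) := rfl
    rw [hstep, dstep_corr i x]
    exact ih _ hred' hle'

end Aux

/-- If `u ≤ w` in Bruhat order, `lw` is a reduced word for `w` and `lu` is a reduced
word for `u⁻¹ w₀`, then the Demazure product of the concatenated word equals `w₀`. -/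
theorem stmt1 {n : ℕ} (u w : Equiv.Perm (Fin (n + 1))) (huw : BruhatLE u w)
    (lw lu : List (Fin n)) (hw : IsReducedWord lw w)
    (hu : IsReducedWord lu (u⁻¹ * longest n)) :
    demazure (lw ++ lu) = longest n := by
  obtain ⟨hwp, hwl⟩ := hw
  obtain ⟨hup, hul⟩ := hu
  have hdu : demazure lu = u⁻¹ * longest n := by
    rw [← hup]
    exact Aux.reduced_demazure lu (by rw [hup, ← hul])
  rw [Aux.demazure_append, hdu]
  have h1 : len (wordProd lw) = lw.length := by rw [hwp, ← hwl]
  have h2 : ∀ i j, Aux.rk (wordProd (n := n) lw) i j ≤ Aux.rk u i j := by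
    rw [hwp]; exact huw
  exact Aux.mainLem lw u h1 h2
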